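/- Let D be a 2-(v,k,λ) design with k < v admitting a flag-transitive automorphism group G, and let r be the replication number of D. Then for every point x and every point y ≠ x, the integer r/gcd(r,λ) divides the length of the orbit of y under the point stabilizer G_x; in particular r/gcd(r,λ) divides v−1. -/

import Mathlib

open Finset

/-- Lemma 2.5(2) of the paper.  Let `D` be a 2-`(v,k,λ)` design
with `k < v` and replication number `r`, admitting a flag-transitive automorphism
group `G`.  Then for every point `x` and every point `y ≠ x`, the integer
`r/gcd(r,λ)` divides the length of the orbit of `y` under the point stabiliser
`G_x`; in particular `r/gcd(r,λ)` divides `v − 1`. -/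
theorem rep_div_gcd_dvd_suborbit_lengths
    {P ι G : Type*} [Fintype P] [DecidableEq P] [Fintype ι]
    [Group G] [MulAction G P] [MulAction G ι]
    (blk : ι → Finset P) (v k lam r : ℕ)
    (card_points : Fintype.card P = v)
    (k_lt_v : k < v) (lam_pos : 0 < lam)
    (blk_card : ∀ i : ι, (blk i).card = k)
    (pair_count : ∀ x y : P, x ≠ y →
      (univ.filter fun i : ι => x ∈ blk i ∧ y ∈ blk i).card = lam)
    (rep_count : ∀ x : P, (univ.filter fun i : ι => x ∈ blk i).card = r)
    (smul_blk : ∀ (g : G) (i : ι), blk (g • i) = (blk i).image fun x => g • x)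
    (flag_trans : ∀ (x : P) (i : ι), x ∈ blk i → ∀ (y : P) (j : ι), y ∈ blk j →
      ∃ g : G, g • x = y ∧ g • i = j) :
    (∀ x y : P, x ≠ y →
      r / Nat.gcd r lam ∣ Nat.card (MulAction.orbit (MulAction.stabilizer G x) y)) ∧
    r / Nat.gcd r lam ∣ v - 1 := by
  classical
  set d := Nat.gcd r lam with hd
  -- orbits under the stabilizer are invariant under stabilizer elements
  have orbinv : ∀ (x y : P) (g : G), g ∈ MulAction.stabilizer G x →
      ∀ z ∈ MulAction.orbit (MulAction.stabilizer G x) y,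
        g • z ∈ MulAction.orbit (MulAction.stabilizer G x) y := by
    intro x y g hg z hz
    obtain ⟨h, rfl⟩ := hz
    exact ⟨⟨g, hg⟩ * h, by simp [mul_smul]⟩
  have main : ∀ x y : P, x ≠ y →
      r / d ∣ Nat.card (MulAction.orbit (MulAction.stabilizer G x) y) := by
    intro x y hxy
    set Os : Set P := MulAction.orbit (MulAction.stabilizer G x) y with hOs
    set O : Finset P := Os.toFinset with hOdef
    have hyO : y ∈ O := by
      rw [hOdef, Set.mem_toFinset]
      exact MulAction.mem_orbit_self y
    set S : Finset ι := univ.filter (fun i => x ∈ blk i) with hS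
    have hScard : S.card = r := rep_count x
    have hSne : S.Nonempty := by
      have hpc := pair_count x y hxy
      have hpos : 0 < (univ.filter fun i : ι => x ∈ blk i ∧ y ∈ blk i).card :=
        hpc ▸ lam_pos
      obtain ⟨i, hi⟩ := card_pos.mp hpos
      simp only [mem_filter] at hi
      exact ⟨i, by simp [hS, hi.2.1]⟩
    have hrpos : 0 < r := hScard ▸ card_pos.mpr hSne
    have hdpos : 0 < d := Nat.gcd_pos_of_pos_left lam hrpos
    -- every point of the orbit is distinct from x
    have hzx : ∀ z ∈ O, z ≠ x := by
      intro z hz hne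
      rw [hOdef, Set.mem_toFinset] at hz
      obtain ⟨h, hh⟩ := hz
      apply hxy
      have h2 : y = h⁻¹ • z := by rw [← hh]; exact (inv_smul_smul h y).symm
      rw [h2, hne]
      exact (MulAction.mem_stabilizer_iff.mp h⁻¹.2).symm
    have hlamz : ∀ z ∈ O, (S.filter (fun i => z ∈ blk i)).card = lam := by
      intro z hz
      rw [hS, filter_filter]
      exact pair_count x z (Ne.symm (hzx z hz))
    -- double counting
    have hsum : ∑ i ∈ S, (O.filter (fun z => z ∈ blk i)).card = O.card * lam := by
      calc ∑ i ∈ S, (O.filter (fun z => z ∈ blk i)).card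
          = ∑ i ∈ S, ∑ z ∈ O, if z ∈ blk i then 1 else 0 :=
            Finset.sum_congr rfl (fun i _ => Finset.card_filter _ _)
        _ = ∑ z ∈ O, ∑ i ∈ S, if z ∈ blk i then 1 else 0 := Finset.sum_comm
        _ = ∑ z ∈ O, (S.filter (fun i => z ∈ blk i)).card :=
            Finset.sum_congr rfl (fun z _ => (Finset.card_filter _ _).symm)
        _ = ∑ z ∈ O, lam := Finset.sum_congr rfl (fun z hz => hlamz z hz)
        _ = O.card * lam := by rw [Finset.sum_const, smul_eq_mul]
    -- constancy of intersection sizes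
    have hconst : ∀ i ∈ S, ∀ j ∈ S,
        (O.filter (fun z => z ∈ blk i)).card = (O.filter (fun z => z ∈ blk j)).card := by
      intro i hi j hj
      rw [hS, mem_filter] at hi hj
      obtain ⟨g, hgx, hgi⟩ := flag_trans x i hi.2 x j hj.2
      have hgst : g ∈ MulAction.stabilizer G x := hgx
      refine Finset.card_bij (fun z _ => g • z) ?_ ?_ ?_
      · intro z hz
        rw [mem_filter] at hz ⊢
        refine ⟨?_, ?_⟩
        · rw [hOdef, Set.mem_toFinset] at *
          exact orbinv x y g hgst z hz.1
        · rw [← hgi, smul_blk]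
          exact mem_image_of_mem _ hz.2
      · intro a _ b _ hab
        exact smul_left_cancel g hab
      · intro z hz
        refine ⟨g⁻¹ • z, ?_, by simp⟩
        rw [mem_filter] at hz ⊢
        refine ⟨?_, ?_⟩
        · rw [hOdef, Set.mem_toFinset] at *
          exact orbinv x y g⁻¹ (inv_mem hgst) z hz.1
        · have hzj := hz.2
          rw [← hgi, smul_blk] at hzj
          obtain ⟨w, hw, hwz⟩ := mem_image.mp hzj
          have : g⁻¹ • z = w := by rw [← hwz]; simp
          rw [this]; exact hw
    obtain ⟨i₀, hi₀⟩ := hSne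
    set c := (O.filter (fun z => z ∈ blk i₀)).card with hc
    have hsum2 : ∑ i ∈ S, (O.filter (fun z => z ∈ blk i)).card = r * c := by
      rw [Finset.sum_congr rfl (fun i hi => hconst i hi i₀ hi₀)]
      simp [hScard, mul_comm, hc]
    have key : r * c = O.card * lam := by rw [← hsum2, hsum]
    have hdvd : r ∣ O.card * lam := ⟨c, key.symm⟩
    have hco : Nat.Coprime (r / d) (lam / d) := Nat.coprime_div_gcd_div_gcd hdpos
    have hdr : d ∣ r := Nat.gcd_dvd_left r lam
    have hdl : d ∣ lam := Nat.gcd_dvd_right r lam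
    obtain ⟨m, hm⟩ := hdvd
    have h2 : r / d ∣ O.card * (lam / d) := by
      refine ⟨m, ?_⟩
      apply Nat.eq_of_mul_eq_mul_left hdpos
      calc d * (O.card * (lam / d)) = O.card * (d * (lam / d)) := by ring
        _ = O.card * lam := by rw [Nat.mul_div_cancel' hdl]
        _ = r * m := hm
        _ = d * (r / d) * m := by rw [Nat.mul_div_cancel' hdr]
        _ = d * (r / d * m) := by ring
    have h3 : r / d ∣ O.card := hco.dvd_of_dvd_mul_right h2
    have hcardEq : Nat.card Os = O.card := by
      rw [hOdef, Set.toFinset_card, Nat.card_eq_fintype_card]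
    show r / d ∣ Nat.card Os
    rw [hcardEq]
    exact h3
  refine ⟨main, ?_⟩
  have hv1 : 0 < v := Nat.lt_of_le_of_lt (Nat.zero_le k) k_lt_v
  have hPne : Nonempty P := by
    rw [← Fintype.card_pos_iff, card_points]; exact hv1
  obtain ⟨x⟩ := hPne
  have ind : ∀ n (T : Finset P), T.card ≤ n → x ∉ T →
      (∀ g ∈ MulAction.stabilizer G x, ∀ z ∈ T, g • z ∈ T) → r / d ∣ T.card := by
    intro n
    induction n with
    | zero =>
        intro T hT _ _
        have : T.card = 0 := Nat.le_zero.mp hT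
        simp [this]
    | succ n ih =>
        intro T hT hxT hclos
        rcases T.eq_empty_or_nonempty with rfl | ⟨y, hy⟩
        · simp
        · have hyx : x ≠ y := fun h => hxT (h ▸ hy)
          set Os : Set P := MulAction.orbit (MulAction.stabilizer G x) y with hOs
          set O : Finset P := Os.toFinset with hOdef
          have hOsub : O ⊆ T := by
            intro z hz
            rw [hOdef, Set.mem_toFinset] at hz
            obtain ⟨h, rfl⟩ := hz
            exact hclos (↑h) h.2 y hy
          have hyO : y ∈ O := by
            rw [hOdef, Set.mem_toFinset]; exact MulAction.mem_orbit_self y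
          have hOpos : 0 < O.card := card_pos.mpr ⟨y, hyO⟩
          have hOle : O.card ≤ T.card := card_le_card hOsub
          have hcard : T.card = O.card + (T \ O).card := by
            rw [card_sdiff_of_subset hOsub]; omega
          have hrec : r / d ∣ (T \ O).card := by
            apply ih
            · have : (T \ O).card = T.card - O.card := card_sdiff_of_subset hOsub
              omega
            · intro h; exact hxT (mem_sdiff.mp h).1
            · intro g hg z hz
              rw [mem_sdiff] at hz ⊢
              refine ⟨hclos g hg z hz.1, fun hmem => hz.2 ?_⟩
              rw [hOdef, Set.mem_toFinset] at hmem ⊢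
              have := orbinv x y g⁻¹ (inv_mem hg) _ hmem
              simpa using this
          have hOdvd : r / d ∣ O.card := by
            have hmn := main x y hyx
            have hcardEq : Nat.card Os = O.card := by
              rw [hOdef, Set.toFinset_card, Nat.card_eq_fintype_card]
            have hmn' : r / d ∣ Nat.card Os := hmn
            rwa [hcardEq] at hmn'
          rw [hcard]
          exact Nat.dvd_add hOdvd hrec
  have hkey := ind (Fintype.card P) (univ.erase x) ?_ (notMem_erase x univ) ?_
  · have : (univ.erase x).card = v - 1 := by
      rw [card_erase_of_mem (mem_univ x), card_univ, card_points]
    rwa [this] at hkey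
  · rw [card_erase_of_mem (mem_univ x), card_univ]; omega
  · intro g hg z hz
    rw [mem_erase] at hz ⊢
    refine ⟨fun h => hz.1 ?_, mem_univ _⟩
    have hgx : g • x = x := hg
    calc z = g⁻¹ • (g • z) := by simp
      _ = g⁻¹ • x := by rw [h]
      _ = g⁻¹ • (g • x) := by rw [hgx]
      _ = x := by simp
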